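/- Let K be a number field, 𝔞 a fractional ideal, and let the group SL(O_K ⊕ 𝔞) = {A ∈ SL(2,K) : A = (a b; c d) with a,d ∈ O_K, b ∈ 𝔞, c ∈ 𝔞^{-1}} act on P¹(K) by fractional linear transformations. Then the map sending [α:β] to the ideal class of O_K·α + 𝔞·β induces a bijection between the orbit space SL(O_K ⊕ 𝔞)\P¹(K) and the ideal class group CL(K). -/

import Mathlib

open NumberField FractionalIdeal UniqueFactorizationMonoid
open scoped nonZeroDivisors
set_option linter.unusedSectionVars false
set_option linter.unusedVariables false

variable (K : Type) [Field K] [NumberField K]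

/-- Membership in `SL(𝓞_K ⊕ 𝔞)`: a matrix `(a b; c d) ∈ SL(2,K)` with
`a, d ∈ 𝓞_K`, `b ∈ 𝔞`, `c ∈ 𝔞⁻¹`. -/
def memSLa (𝔞 : FractionalIdeal (nonZeroDivisors (𝓞 K)) K)
    (g : Matrix.SpecialLinearGroup (Fin 2) K) : Prop :=
  (g : Matrix (Fin 2) (Fin 2) K) 0 0 ∈ (1 : FractionalIdeal (nonZeroDivisors (𝓞 K)) K) ∧
  (g : Matrix (Fin 2) (Fin 2) K) 0 1 ∈ 𝔞 ∧
  (g : Matrix (Fin 2) (Fin 2) K) 1 0 ∈ 𝔞⁻¹ ∧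
  (g : Matrix (Fin 2) (Fin 2) K) 1 1 ∈ (1 : FractionalIdeal (nonZeroDivisors (𝓞 K)) K)

/-- The fractional ideal `𝓞_K·α + 𝔞·β` attached to `[α : β] ∈ P¹(K)`. -/
noncomputable def idlOf (𝔞 : FractionalIdeal (nonZeroDivisors (𝓞 K)) K) (v : Fin 2 → K) :
    FractionalIdeal (nonZeroDivisors (𝓞 K)) K :=
  spanSingleton (nonZeroDivisors (𝓞 K)) (v 0) + 𝔞 * spanSingleton (nonZeroDivisors (𝓞 K)) (v 1)

theorem CuspAux.exists_span_sup_mul {R : Type*} [CommRing R] [IsDedekindDomain R]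
    (I J : Ideal R) (hI : I ≠ ⊥) (hJ : J ≠ ⊥) :
    ∃ a ∈ I, Ideal.span {a} ⊔ I * J = I := by
  classical
  by_cases hIJtop : I * J = ⊤
  · have hItop : ⊤ ≤ I := hIJtop ▸ Ideal.mul_le_left (I := I) (J := J)
    refine ⟨1, hItop trivial, ?_⟩
    rw [Ideal.span_singleton_one]
    rw [top_sup_eq]
    exact (top_le_iff.mp hItop).symm
  have hI0 : I ≠ 0 := hI
  have hJ0 : J ≠ 0 := hJ
  have hIJ0 : I * J ≠ 0 := mul_ne_zero hI0 hJ0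
  set s : Finset (Ideal R) := (normalizedFactors (I * J)).toFinset with hs
  have hmem_s : ∀ {Q : Ideal R}, Q ∈ normalizedFactors (I * J) → Q ∈ s := fun h =>
    Multiset.mem_toFinset.mpr h
  have hfacmul : normalizedFactors (I * J) = normalizedFactors I + normalizedFactors J :=
    normalizedFactors_mul hI0 hJ0
  have hprime : ∀ P ∈ s, Prime P := fun P hP =>
    prime_of_normalized_factor P (Multiset.mem_toFinset.mp hP)
  set c : Ideal R → ℕ := fun P => (normalizedFactors I).count P with hc
  -- choose elements of exact valuation
  have hex : ∀ P : s, ∃ x, x ∈ (P : Ideal R) ^ c P ∧ x ∉ (P : Ideal R) ^ (c P + 1) := by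
    rintro ⟨P, hP⟩
    have hp := hprime P hP
    obtain ⟨x, hx1, hx2⟩ := Ideal.exists_mem_pow_notMem_pow_succ P hp.ne_zero
      (Ideal.isPrime_of_prime hp).ne_top (c P)
    exact ⟨x, hx1, hx2⟩
  choose a ha1 ha2 using hex
  obtain ⟨y, hy⟩ := IsDedekindDomain.exists_forall_sub_mem_ideal (s := s) id
    (fun P => c P + 1) hprime (fun _ _ _ _ h => h) a
  have hy1 : ∀ P (hP : P ∈ s), y ∈ P ^ c P := by
    intro P hP
    have h := Ideal.pow_le_pow_right (Nat.le_succ (c P)) (hy P hP)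
    have := (P ^ c P).add_mem h (ha1 ⟨P, hP⟩)
    simpa using this
  have hy2 : ∀ P (hP : P ∈ s), y ∉ P ^ (c P + 1) := by
    intro P hP h
    exact ha2 ⟨P, hP⟩ (by simpa using (P ^ (c P + 1)).sub_mem h (hy P hP))
  have hsne : s.Nonempty := by
    obtain ⟨Q, hQ⟩ := exists_mem_normalizedFactors hIJ0 (fun h => hIJtop (Ideal.isUnit_iff.mp h))
    exact ⟨Q, hmem_s hQ⟩
  have hy0 : y ≠ 0 := by
    rintro rfl
    obtain ⟨P, hP⟩ := hsne
    exact hy2 P hP (zero_mem _)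
  have hspan0 : Ideal.span {y} ≠ 0 := by
    simpa [Ideal.span_singleton_eq_bot] using hy0
  have hcount : ∀ P (hP : P ∈ s), (normalizedFactors (Ideal.span {y})).count P = c P := by
    intro P hP
    haveI : P.IsPrime := Ideal.isPrime_of_prime (hprime P hP)
    refine Ideal.count_normalizedFactors_eq ?_ ?_
    · exact Ideal.span_le.mpr (Set.singleton_subset_iff.mpr (hy1 P hP))
    · intro hle
      exact hy2 P hP (hle (Ideal.mem_span_singleton_self y))
  have hnotmem : ∀ {Q : Ideal R}, Q ∉ s → (normalizedFactors I).count Q = 0 ∧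
      (normalizedFactors J).count Q = 0 := by
    intro Q hQ
    constructor <;> rw [Multiset.count_eq_zero] <;> intro hmm <;>
      exact hQ (hmem_s (by rw [hfacmul]; exact Multiset.mem_add.mpr (by tauto)))
  have hyI : y ∈ I := by
    rw [← Ideal.span_singleton_le_iff_mem, ← Ideal.dvd_iff_le]
    rw [dvd_iff_normalizedFactors_le_normalizedFactors hI0 hspan0, Multiset.le_iff_count]
    intro Q
    by_cases hQ : Q ∈ s
    · rw [hcount Q hQ]
    · rw [(hnotmem hQ).1]
      exact Nat.zero_le _
  refine ⟨y, hyI, ?_⟩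
  set G : Ideal R := Ideal.span {y} ⊔ I * J with hG
  have hGI : G ≤ I := sup_le ((Ideal.span_singleton_le_iff_mem _).mpr hyI)
    (Ideal.mul_le_left (I := I) (J := J))
  have hG0 : G ≠ 0 := by
    intro h
    apply hspan0
    have h1 : Ideal.span {y} ≤ G := le_sup_left
    rw [h] at h1
    exact le_bot_iff.mp h1
  refine le_antisymm hGI ?_
  rw [← Ideal.dvd_iff_le, dvd_iff_normalizedFactors_le_normalizedFactors hG0 hI0,
    Multiset.le_iff_count]
  intro Q
  have h1 : (normalizedFactors G).count Q ≤ (normalizedFactors (Ideal.span {y})).count Q :=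
    Multiset.le_iff_count.mp ((dvd_iff_normalizedFactors_le_normalizedFactors hG0
      hspan0).mp (Ideal.dvd_iff_le.mpr le_sup_left)) Q
  have h2 : (normalizedFactors G).count Q ≤ (normalizedFactors (I * J)).count Q :=
    Multiset.le_iff_count.mp ((dvd_iff_normalizedFactors_le_normalizedFactors hG0
      hIJ0).mp (Ideal.dvd_iff_le.mpr le_sup_right)) Q
  by_cases hQ : Q ∈ s
  · rw [hcount Q hQ] at h1; exact h1
  · rw [hfacmul, Multiset.count_add, (hnotmem hQ).2, Nat.add_zero] at h2; exact h2

namespace CuspAux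

variable {K}
set_option linter.unusedSectionVars false
set_option linter.unusedVariables false

theorem add_le' {a b c : FractionalIdeal (𝓞 K)⁰ K} (h1 : a ≤ c) (h2 : b ≤ c) : a + b ≤ c := by
  rw [← sup_eq_add]; exact sup_le h1 h2

theorem mul_mono {a b c : FractionalIdeal (𝓞 K)⁰ K} (h : b ≤ c) : a * b ≤ a * c :=
  mul_le.mpr fun i hi j hj => mul_mem_mul hi (h hj)

theorem mem_add_of {I J : FractionalIdeal (𝓞 K)⁰ K} {x y : K} (hx : x ∈ I) (hy : y ∈ J) :
    x + y ∈ I + J := by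
  have := Submodule.add_mem_sup hx hy
  rwa [← Submodule.add_eq_sup, ← FractionalIdeal.coe_add, FractionalIdeal.mem_coe] at this

theorem exists_add_of_mem {I J : FractionalIdeal (𝓞 K)⁰ K} {x : K} (hx : x ∈ I + J) :
    ∃ y ∈ I, ∃ z ∈ J, y + z = x := by
  rw [← FractionalIdeal.mem_coe, FractionalIdeal.coe_add, Submodule.add_eq_sup] at hx
  exact Submodule.mem_sup.mp hx

theorem smul_mem' {I : FractionalIdeal (𝓞 K)⁰ K} {x : K} (hx : x ∈ I) (z : 𝓞 K) : z • x ∈ I :=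
  Submodule.smul_mem (I : Submodule (𝓞 K) K) z hx

theorem neg_mem' {I : FractionalIdeal (𝓞 K)⁰ K} {x : K} (hx : x ∈ I) : -x ∈ I :=
  Submodule.neg_mem (I : Submodule (𝓞 K) K) hx

theorem mem_one_mul_span {a : K} (ha : a ∈ (1 : FractionalIdeal (𝓞 K)⁰ K)) (x : K) :
    a * x ∈ spanSingleton (𝓞 K)⁰ x := by
  obtain ⟨z, hz⟩ := (FractionalIdeal.mem_one_iff _).mp ha
  exact (FractionalIdeal.mem_spanSingleton _).mpr ⟨z, by rw [Algebra.smul_def, hz]⟩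

theorem add_mem'' {I : FractionalIdeal (𝓞 K)⁰ K} {x y : K} (hx : x ∈ I) (hy : y ∈ I) :
    x + y ∈ I :=
  Submodule.add_mem (I : Submodule (𝓞 K) K) hx hy

theorem mulMem {A B C : FractionalIdeal (𝓞 K)⁰ K} {a b : K}
    (ha : a ∈ A) (hb : b ∈ B) (hABC : A * B ≤ C) : a * b ∈ C :=
  hABC (mul_mem_mul ha hb)

theorem mulVec_apply_zero (g : Matrix (Fin 2) (Fin 2) K) (v : Fin 2 → K) :
    g.mulVec v 0 = g 0 0 * v 0 + g 0 1 * v 1 := by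
  simp [Matrix.mulVec, dotProduct, Fin.sum_univ_two]

theorem mulVec_apply_one (g : Matrix (Fin 2) (Fin 2) K) (v : Fin 2 → K) :
    g.mulVec v 1 = g 1 0 * v 0 + g 1 1 * v 1 := by
  simp [Matrix.mulVec, dotProduct, Fin.sum_univ_two]

end CuspAux

namespace CuspAux

variable {K}

theorem span_v0_le {𝔞 : FractionalIdeal (𝓞 K)⁰ K} (v : Fin 2 → K) :
    spanSingleton (𝓞 K)⁰ (v 0) ≤ idlOf K 𝔞 v := by
  rw [idlOf, ← sup_eq_add]; exact le_sup_left

theorem a_span_v1_le {𝔞 : FractionalIdeal (𝓞 K)⁰ K} (v : Fin 2 → K) :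
    𝔞 * spanSingleton (𝓞 K)⁰ (v 1) ≤ idlOf K 𝔞 v := by
  rw [idlOf, ← sup_eq_add]; exact le_sup_right

theorem idl_smul (𝔞 : FractionalIdeal (𝓞 K)⁰ K) (c : K) (w : Fin 2 → K) :
    idlOf K 𝔞 (c • w) = spanSingleton (𝓞 K)⁰ c * idlOf K 𝔞 w := by
  simp only [idlOf, Pi.smul_apply, smul_eq_mul, ← spanSingleton_mul_spanSingleton, mul_add]
  ring

theorem idl_ne_zero {𝔞 : FractionalIdeal (𝓞 K)⁰ K} (ha : 𝔞 ≠ 0) {v : Fin 2 → K} (hv : v ≠ 0) :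
    idlOf K 𝔞 v ≠ 0 := by
  intro h
  apply hv
  have h0 : spanSingleton (𝓞 K)⁰ (v 0) = 0 :=
    FractionalIdeal.le_zero_iff.mp (h ▸ span_v0_le v)
  have h1 : 𝔞 * spanSingleton (𝓞 K)⁰ (v 1) = 0 :=
    FractionalIdeal.le_zero_iff.mp (h ▸ a_span_v1_le v)
  rcases mul_eq_zero.mp h1 with h1 | h1
  · exact absurd h1 ha
  · funext i
    fin_cases i
    · exact spanSingleton_eq_zero_iff.mp h0
    · exact spanSingleton_eq_zero_iff.mp h1

theorem idl_mulVec_le {𝔞 : FractionalIdeal (𝓞 K)⁰ K} (ha : 𝔞 ≠ 0)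
    {g : Matrix.SpecialLinearGroup (Fin 2) K} (hg : memSLa K 𝔞 g) (v : Fin 2 → K) :
    idlOf K 𝔞 ((g : Matrix (Fin 2) (Fin 2) K).mulVec v) ≤ idlOf K 𝔞 v := by
  obtain ⟨hA, hB, hC, hD⟩ := hg
  have hai : 𝔞 * 𝔞⁻¹ ≤ 1 := le_of_eq (mul_inv_cancel₀ ha)
  rw [idlOf]
  apply add_le'
  · rw [spanSingleton_le_iff_mem, mulVec_apply_zero]
    exact mem_add_of (mem_one_mul_span hA _) (mul_mem_mul hB (mem_spanSingleton_self _ _))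
  · rw [mul_le]
    intro i hi j hj
    obtain ⟨z, hz⟩ := (FractionalIdeal.mem_spanSingleton _).mp hj
    rw [← hz, mul_smul_comm]
    apply smul_mem'
    rw [mulVec_apply_one, mul_add,
      show i * ((g : Matrix (Fin 2) (Fin 2) K) 1 0 * v 0) =
        ((g : Matrix (Fin 2) (Fin 2) K) 1 0 * i) * v 0 by ring,
      show i * ((g : Matrix (Fin 2) (Fin 2) K) 1 1 * v 1) =
        ((g : Matrix (Fin 2) (Fin 2) K) 1 1 * i) * v 1 by ring]
    refine mem_add_of ?_ ?_
    · have h1 : (g : Matrix (Fin 2) (Fin 2) K) 1 0 * i ∈ (1 : FractionalIdeal (𝓞 K)⁰ K) :=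
        mulMem hC hi (by rw [mul_comm]; exact hai)
      exact mem_one_mul_span h1 _
    · have h1 : (g : Matrix (Fin 2) (Fin 2) K) 1 1 * i ∈ 𝔞 :=
        mulMem hD hi (by rw [one_mul])
      exact mul_mem_mul h1 (mem_spanSingleton_self _ _)

theorem memSLa_inv {𝔞 : FractionalIdeal (𝓞 K)⁰ K}
    {g : Matrix.SpecialLinearGroup (Fin 2) K} (hg : memSLa K 𝔞 g) : memSLa K 𝔞 g⁻¹ := by
  obtain ⟨hA, hB, hC, hD⟩ := hg
  rw [memSLa, Matrix.SpecialLinearGroup.SL2_inv_expl]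
  refine ⟨?_, ?_, ?_, ?_⟩ <;> simp [hD, hA, neg_mem' hB, neg_mem' hC]

theorem exists_xy {𝔞 𝔟 : FractionalIdeal (𝓞 K)⁰ K} (hb : 𝔟 ≠ 0) {v : Fin 2 → K}
    (hv : idlOf K 𝔞 v = 𝔟) :
    ∃ x y : K, x ∈ 𝔟⁻¹ ∧ y ∈ 𝔞 * 𝔟⁻¹ ∧ x * v 0 + y * v 1 = 1 := by
  have h1 : (1 : K) ∈ 𝔟⁻¹ * spanSingleton (𝓞 K)⁰ (v 0) +
      𝔟⁻¹ * (𝔞 * spanSingleton (𝓞 K)⁰ (v 1)) := by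
    rw [← mul_add]
    show (1 : K) ∈ 𝔟⁻¹ * idlOf K 𝔞 v
    rw [hv, mul_comm, mul_inv_cancel₀ hb]
    exact one_mem_one _
  obtain ⟨p, hp, q, hq, hpq⟩ := exists_add_of_mem h1
  rw [mul_comm] at hp
  obtain ⟨x, hx, rfl⟩ := mem_singleton_mul.mp hp
  rw [show 𝔟⁻¹ * (𝔞 * spanSingleton (𝓞 K)⁰ (v 1)) =
    spanSingleton (𝓞 K)⁰ (v 1) * (𝔞 * 𝔟⁻¹) by ring] at hq
  obtain ⟨y, hy, rfl⟩ := mem_singleton_mul.mp hq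
  exact ⟨x, y, hx, hy, by rw [← hpq]; ring⟩

theorem v1_mem {𝔞 𝔟 : FractionalIdeal (𝓞 K)⁰ K} (ha : 𝔞 ≠ 0) {v : Fin 2 → K}
    (hv : idlOf K 𝔞 v = 𝔟) : v 1 ∈ 𝔞⁻¹ * 𝔟 := by
  have h1 : 𝔞 * spanSingleton (𝓞 K)⁰ (v 1) ≤ 𝔟 := hv ▸ a_span_v1_le v
  have h2 := mul_mono (a := 𝔞⁻¹) h1
  rw [← mul_assoc, mul_comm 𝔞⁻¹ 𝔞, mul_inv_cancel₀ ha, one_mul] at h2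
  exact spanSingleton_le_iff_mem.mp h2

theorem exists_g {𝔞 𝔟 : FractionalIdeal (𝓞 K)⁰ K} (ha : 𝔞 ≠ 0) (hb : 𝔟 ≠ 0)
    {v w : Fin 2 → K} (hv : idlOf K 𝔞 v = 𝔟) (hw : idlOf K 𝔞 w = 𝔟) :
    ∃ g : Matrix.SpecialLinearGroup (Fin 2) K, memSLa K 𝔞 g ∧
      (g : Matrix (Fin 2) (Fin 2) K).mulVec v = w := by
  obtain ⟨xv, yv, hxv, hyv, hev⟩ := exists_xy hb hv
  obtain ⟨xw, yw, hxw, hyw, hew⟩ := exists_xy hb hw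
  have hv0 : v 0 ∈ 𝔟 := spanSingleton_le_iff_mem.mp (hv ▸ span_v0_le v)
  have hw0 : w 0 ∈ 𝔟 := spanSingleton_le_iff_mem.mp (hw ▸ span_v0_le w)
  have hv1 : v 1 ∈ 𝔞⁻¹ * 𝔟 := v1_mem ha hv
  have hw1 : w 1 ∈ 𝔞⁻¹ * 𝔟 := v1_mem ha hw
  have haa : 𝔞 * 𝔞⁻¹ = 1 := mul_inv_cancel₀ ha
  have hbb : 𝔟 * 𝔟⁻¹ = 1 := mul_inv_cancel₀ hb
  have e1 : 𝔟 * 𝔟⁻¹ ≤ 1 := le_of_eq hbb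
  have e2 : (𝔞 * 𝔟⁻¹) * (𝔞⁻¹ * 𝔟) ≤ 1 := le_of_eq (by
    rw [show (𝔞 * 𝔟⁻¹) * (𝔞⁻¹ * 𝔟) = (𝔞 * 𝔞⁻¹) * (𝔟 * 𝔟⁻¹) from by ring, haa, hbb, one_mul])
  have e3 : 𝔟 * (𝔞 * 𝔟⁻¹) ≤ 𝔞 := le_of_eq (by
    rw [show 𝔟 * (𝔞 * 𝔟⁻¹) = (𝔟 * 𝔟⁻¹) * 𝔞 from by ring, hbb, one_mul])
  have e4 : (𝔞 * 𝔟⁻¹) * 𝔟 ≤ 𝔞 := le_of_eq (by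
    rw [show (𝔞 * 𝔟⁻¹) * 𝔟 = (𝔟 * 𝔟⁻¹) * 𝔞 from by ring, hbb, one_mul])
  have e5 : (𝔞⁻¹ * 𝔟) * 𝔟⁻¹ ≤ 𝔞⁻¹ := le_of_eq (by
    rw [show (𝔞⁻¹ * 𝔟) * 𝔟⁻¹ = (𝔟 * 𝔟⁻¹) * 𝔞⁻¹ from by ring, hbb, one_mul])
  have e6 : 𝔟⁻¹ * (𝔞⁻¹ * 𝔟) ≤ 𝔞⁻¹ := le_of_eq (by
    rw [show 𝔟⁻¹ * (𝔞⁻¹ * 𝔟) = (𝔟 * 𝔟⁻¹) * 𝔞⁻¹ from by ring, hbb, one_mul])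
  have e7 : (𝔞⁻¹ * 𝔟) * (𝔞 * 𝔟⁻¹) ≤ 1 := le_of_eq (by
    rw [show (𝔞⁻¹ * 𝔟) * (𝔞 * 𝔟⁻¹) = (𝔞 * 𝔞⁻¹) * (𝔟 * 𝔟⁻¹) from by ring, haa, hbb, one_mul])
  have e8 : 𝔟⁻¹ * 𝔟 ≤ 1 := le_of_eq (by rw [mul_comm, hbb])
  have detw : Matrix.det !![w 0, -yw; w 1, xw] = 1 := by
    rw [Matrix.det_fin_two_of]; linear_combination hew
  have detv : Matrix.det !![xv, yv; -(v 1), v 0] = 1 := by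
    rw [Matrix.det_fin_two_of]; linear_combination hev
  let gw : Matrix.SpecialLinearGroup (Fin 2) K := ⟨!![w 0, -yw; w 1, xw], detw⟩
  let gv : Matrix.SpecialLinearGroup (Fin 2) K := ⟨!![xv, yv; -(v 1), v 0], detv⟩
  have hGcoe : ((gw * gv : Matrix.SpecialLinearGroup (Fin 2) K) : Matrix (Fin 2) (Fin 2) K)
      = !![w 0, -yw; w 1, xw] * !![xv, yv; -(v 1), v 0] := rfl
  refine ⟨gw * gv, ?_, ?_⟩
  · rw [memSLa, hGcoe, Matrix.mul_fin_two]
    refine ⟨?_, ?_, ?_, ?_⟩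
    · show w 0 * xv + -yw * -(v 1) ∈ (1 : FractionalIdeal (𝓞 K)⁰ K)
      rw [neg_mul_neg]
      exact add_mem'' (mulMem hw0 hxv e1) (mulMem hyw hv1 e2)
    · show w 0 * yv + -yw * v 0 ∈ 𝔞
      rw [neg_mul]
      exact add_mem'' (mulMem hw0 hyv e3) (neg_mem' (mulMem hyw hv0 e4))
    · show w 1 * xv + xw * -(v 1) ∈ 𝔞⁻¹
      rw [mul_neg]
      exact add_mem'' (mulMem hw1 hxv e5) (neg_mem' (mulMem hxw hv1 e6))
    · show w 1 * yv + xw * v 0 ∈ (1 : FractionalIdeal (𝓞 K)⁰ K)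
      exact add_mem'' (mulMem hw1 hyv e7) (mulMem hxw hv0 e8)
  · funext i
    fin_cases i
    · show ((gw * gv : Matrix.SpecialLinearGroup (Fin 2) K) :
        Matrix (Fin 2) (Fin 2) K).mulVec v 0 = w 0
      rw [mulVec_apply_zero, hGcoe, Matrix.mul_fin_two]
      show (w 0 * xv + -yw * -(v 1)) * v 0 + (w 0 * yv + -yw * v 0) * v 1 = w 0
      linear_combination (w 0) * hev
    · show ((gw * gv : Matrix.SpecialLinearGroup (Fin 2) K) :
        Matrix (Fin 2) (Fin 2) K).mulVec v 1 = w 1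
      rw [mulVec_apply_one, hGcoe, Matrix.mul_fin_two]
      show (w 1 * xv + xw * -(v 1)) * v 0 + (w 1 * yv + xw * v 0) * v 1 = w 1
      linear_combination (w 1) * hev

end CuspAux

/-- Cusp–ideal class correspondence: the map `[α:β] ↦ [𝓞_K·α + 𝔞·β]` induces a
bijection between `SL(𝓞_K ⊕ 𝔞)\P¹(K)` and the ideal class group of `K`:
(1) two nonzero vectors are in the same `SL(𝓞_K ⊕ 𝔞)`-orbit in `P¹(K)` iff the
attached fractional ideals lie in the same ideal class, and
(2) every nonzero fractional ideal arises as `𝓞_K·α + 𝔞·β` for some `[α:β]`. -/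
theorem cusp_ideal_class_correspondence
    (𝔞 : FractionalIdeal (nonZeroDivisors (𝓞 K)) K) (ha : 𝔞 ≠ 0) :
    (∀ v w : Fin 2 → K, v ≠ 0 → w ≠ 0 →
      ((∃ g : Matrix.SpecialLinearGroup (Fin 2) K, memSLa K 𝔞 g ∧
          ∃ c : K, c ≠ 0 ∧ (g : Matrix (Fin 2) (Fin 2) K).mulVec v = c • w) ↔
        (∃ k : K, k ≠ 0 ∧
          idlOf K 𝔞 v = spanSingleton (nonZeroDivisors (𝓞 K)) k * idlOf K 𝔞 w))) ∧
    (∀ 𝔟 : FractionalIdeal (nonZeroDivisors (𝓞 K)) K, 𝔟 ≠ 0 →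
      ∃ v : Fin 2 → K, v ≠ 0 ∧ idlOf K 𝔞 v = 𝔟) := by
  constructor
  · intro v w hv hw
    constructor
    · rintro ⟨g, hg, c, hc0, hgv⟩
      refine ⟨c, hc0, ?_⟩
      have h1 : idlOf K 𝔞 ((g : Matrix (Fin 2) (Fin 2) K).mulVec v) ≤ idlOf K 𝔞 v :=
        CuspAux.idl_mulVec_le ha hg v
      have h2 : idlOf K 𝔞 v ≤ idlOf K 𝔞 ((g : Matrix (Fin 2) (Fin 2) K).mulVec v) := by
        have hinv := CuspAux.idl_mulVec_le ha (CuspAux.memSLa_inv hg)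
          ((g : Matrix (Fin 2) (Fin 2) K).mulVec v)
        rwa [Matrix.mulVec_mulVec, ← Matrix.SpecialLinearGroup.coe_mul, inv_mul_cancel,
          Matrix.SpecialLinearGroup.coe_one, Matrix.one_mulVec] at hinv
      have heq : idlOf K 𝔞 v = idlOf K 𝔞 ((g : Matrix (Fin 2) (Fin 2) K).mulVec v) :=
        le_antisymm h2 h1
      rw [heq, hgv, CuspAux.idl_smul]
    · rintro ⟨k, hk, heq⟩
      have hb : idlOf K 𝔞 v ≠ 0 := CuspAux.idl_ne_zero ha hv
      have hkw : idlOf K 𝔞 (k • w) = idlOf K 𝔞 v := by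
        rw [CuspAux.idl_smul, ← heq]
      obtain ⟨g, hg, hgv⟩ := CuspAux.exists_g ha hb rfl hkw
      exact ⟨g, hg, k, hk, hgv⟩
  · intro 𝔟 hb
    obtain ⟨a, I, ha0, hIeq⟩ := exists_eq_spanSingleton_mul 𝔟
    have hbb : 𝔟 * 𝔟⁻¹ = 1 := mul_inv_cancel₀ hb
    have hbinv : 𝔟⁻¹ ≠ 0 := by
      intro h
      rw [h, mul_zero] at hbb
      exact one_ne_zero hbb.symm
    have hainv : 𝔞⁻¹ ≠ 0 := by
      intro h
      have := mul_inv_cancel₀ ha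
      rw [h, mul_zero] at this
      exact one_ne_zero this.symm
    have hI0 : I ≠ ⊥ := by
      rintro rfl
      rw [coeIdeal_bot, mul_zero] at hIeq
      exact hb hIeq
    have hC : 𝔞⁻¹ * 𝔟 ≠ 0 := mul_ne_zero hainv hb
    obtain ⟨β, hβmem, hβ0⟩ : ∃ x ∈ 𝔞⁻¹ * 𝔟, x ≠ 0 := by
      by_contra h
      push_neg at h
      exact hC (FractionalIdeal.eq_zero_iff.mpr h)
    have hspanβ : spanSingleton (𝓞 K)⁰ β ≤ 𝔞⁻¹ * 𝔟 := spanSingleton_le_iff_mem.mpr hβmem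
    have haβ : 𝔞 * spanSingleton (𝓞 K)⁰ β ≤ 𝔟 := by
      have h1 := CuspAux.mul_mono (a := 𝔞) hspanβ
      rwa [← mul_assoc, mul_inv_cancel₀ ha, one_mul] at h1
    have hCle : 𝔞 * spanSingleton (𝓞 K)⁰ β * 𝔟⁻¹ ≤ 1 := by
      have h1 := CuspAux.mul_mono (a := 𝔟⁻¹) haβ
      rw [mul_comm 𝔟⁻¹ 𝔟, hbb] at h1
      rwa [mul_comm (𝔞 * spanSingleton (𝓞 K)⁰ β) (𝔟⁻¹)]
    obtain ⟨J, hJ⟩ := le_one_iff_exists_coeIdeal.mp hCle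
    have hJ0 : J ≠ ⊥ := by
      rintro rfl
      rw [coeIdeal_bot] at hJ
      exact (mul_ne_zero (mul_ne_zero ha (spanSingleton_ne_zero_iff.mpr hβ0)) hbinv) hJ.symm
    obtain ⟨y, hyI, hysup⟩ := CuspAux.exists_span_sup_mul I J hI0 hJ0
    set a' : K := algebraMap (𝓞 K) K a with ha'
    set y' : K := algebraMap (𝓞 K) K y with hy'
    set α : K := a'⁻¹ * y' with hα
    refine ⟨![α, β], ?_, ?_⟩
    · intro h
      apply hβ0
      have := congrFun h 1
      simpa using this
    · have hcoe : spanSingleton (𝓞 K)⁰ y' +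
          (I : FractionalIdeal (𝓞 K)⁰ K) * (𝔞 * spanSingleton (𝓞 K)⁰ β * 𝔟⁻¹) =
          (I : FractionalIdeal (𝓞 K)⁰ K) := by
        have h1 := congrArg (fun T : Ideal (𝓞 K) => (T : FractionalIdeal (𝓞 K)⁰ K)) hysup
        simpa only [coeIdeal_sup, coeIdeal_mul, coeIdeal_span_singleton, hJ] using h1
      have hstep : idlOf K 𝔞 ![α, β] =
          spanSingleton (𝓞 K)⁰ a'⁻¹ * (spanSingleton (𝓞 K)⁰ y' +
            (I : FractionalIdeal (𝓞 K)⁰ K) * (𝔞 * spanSingleton (𝓞 K)⁰ β * 𝔟⁻¹)) := by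
        rw [idlOf]
        have hv0 : (![α, β] : Fin 2 → K) 0 = α := rfl
        have hv1 : (![α, β] : Fin 2 → K) 1 = β := rfl
        rw [hv0, hv1, hα, ← spanSingleton_mul_spanSingleton, mul_add]
        congr 1
        rw [show spanSingleton (𝓞 K)⁰ a'⁻¹ * ((I : FractionalIdeal (𝓞 K)⁰ K) *
            (𝔞 * spanSingleton (𝓞 K)⁰ β * 𝔟⁻¹)) =
          (spanSingleton (𝓞 K)⁰ a'⁻¹ * (I : FractionalIdeal (𝓞 K)⁰ K)) *
            (𝔞 * spanSingleton (𝓞 K)⁰ β * 𝔟⁻¹) from by ring, ← hIeq,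
          show 𝔟 * (𝔞 * spanSingleton (𝓞 K)⁰ β * 𝔟⁻¹) =
            (𝔟 * 𝔟⁻¹) * (𝔞 * spanSingleton (𝓞 K)⁰ β) from by ring, hbb, one_mul]
      rw [hstep, hcoe, ← hIeq]
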